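/- arXiv:1605.05463 — 3 statements merged into one kernel-verified Lean document; each statement's English description precedes it below -/
import Mathlib

section
/- Let m, n be coprime natural numbers and G any group satisfying aᵐbᵐ = bᵐaᵐ and aⁿbⁿ = bⁿaⁿ for all a, b ∈ G. Then the set T(G) of torsion elements of G is a normal abelian subgroup of G. -/
/-- Core arithmetic fact: with `d = gcd k (m^k)`, no prime dividing `m` divides `k / d`. -/
private lemma core_arith {k m p : ℕ} (hk : k ≠ 0) (hp : p.Prime) (hpm : p ∣ m)
    (hpe : p ∣ k / Nat.gcd k (m ^ k)) : False := by
  set d := Nat.gcd k (m ^ k) with hd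
  have hdk : d ∣ k := Nat.gcd_dvd_left _ _
  have hv : p ^ (k.factorization p) ∣ k := Nat.ordProj_dvd k p
  have hvk : k.factorization p < k := Nat.factorization_lt p hk
  have h1 : p ^ (k.factorization p) ∣ m ^ k :=
    dvd_trans (pow_dvd_pow p hvk.le) (pow_dvd_pow_of_dvd hpm k)
  have hpd : p ^ (k.factorization p) ∣ d := Nat.dvd_gcd hv h1
  have hsucc : p ^ (k.factorization p + 1) ∣ k := by
    have := mul_dvd_mul hpd hpe
    rwa [← pow_succ, Nat.mul_div_cancel' hdk] at this
  exact Nat.pow_succ_factorization_not_dvd hk hp hsucc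

/-- If `w ^ r = 1` and `n` is coprime to `r`, then `w` is an `n`-th power. -/
private lemma exists_pow_eq {G : Type*} [Group G] (w : G) {n r : ℕ} (hw : w ^ r = 1)
    (hco : Nat.Coprime n r) : ∃ a : G, a ^ n = w := by
  have hic : IsCoprime (n : ℤ) (r : ℤ) := by
    rw [Int.isCoprime_iff_gcd_eq_one, Int.gcd_natCast_natCast]; exact hco
  obtain ⟨s, t, hst⟩ := hic
  refine ⟨w ^ s, ?_⟩
  have hwr : w ^ (r : ℤ) = 1 := by rw [zpow_natCast, hw]
  calc (w ^ s) ^ n = w ^ (s * (n : ℤ)) := by rw [← zpow_natCast (w ^ s) n, ← zpow_mul]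
    _ = w ^ (s * (n : ℤ)) * (w ^ (r : ℤ)) ^ t := by rw [hwr]; group
    _ = w ^ (s * (n : ℤ) + (r : ℤ) * t) := by rw [← zpow_mul, ← zpow_add]
    _ = w ^ (1 : ℤ) := by rw [show s * (n : ℤ) + (r : ℤ) * t = 1 by linarith [hst]]
    _ = w := zpow_one w

/-- The cross commuting lemma: an `n`-th power and an `m`-th power of finite coprime
orders commute. -/
private lemma cross {G : Type*} [Group G] {m n : ℕ}
    (hm : ∀ a b : G, a ^ m * b ^ m = b ^ m * a ^ m)
    (hn : ∀ a b : G, a ^ n * b ^ n = b ^ n * a ^ n)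
    {u v : G} (ha : ∃ a, a ^ n = u) (hb : ∃ b, b ^ m = v)
    (hco : Nat.Coprime (orderOf u) (orderOf v)) : Commute u v := by
  obtain ⟨a, ha⟩ := ha
  obtain ⟨b, hb⟩ := hb
  set c := u * v * u⁻¹ * v⁻¹ with hc
  have h1 : Commute (u * v * u⁻¹) v := by
    have e : u * v * u⁻¹ = (u * b * u⁻¹) ^ m := by rw [conj_pow, hb]
    rw [e, ← hb]; exact hm _ _
  have h2 : Commute (v * u * v⁻¹) u := by
    have e : v * u * v⁻¹ = (v * a * v⁻¹) ^ n := by rw [conj_pow, ha]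
    rw [e, ← ha]; exact hn _ _
  have hcv : Commute c v := h1.mul_left (Commute.refl v).inv_left
  have hcu : Commute c u := by
    have h2' : Commute (v * u * v⁻¹ * u⁻¹) u := h2.mul_left (Commute.refl u).inv_left
    have e : c⁻¹ = v * u * v⁻¹ * u⁻¹ := by rw [hc]; group
    have hci : Commute c⁻¹ u := by rw [e]; exact h2'
    exact Commute.inv_left_iff.mp hci
  have key1 : ∀ k : ℕ, u ^ k * v * (u ^ k)⁻¹ * v⁻¹ = c ^ k := by
    intro k
    induction k with
    | zero => simp
    | succ k ih =>
      have ih' : u ^ k * v * (u ^ k)⁻¹ = c ^ k * v := by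
        rw [← ih]; group
      have hcomm : c ^ k * u = u * c ^ k := (hcu.pow_left k).eq
      calc u ^ (k + 1) * v * (u ^ (k + 1))⁻¹ * v⁻¹
          = u * (u ^ k * v * (u ^ k)⁻¹) * u⁻¹ * v⁻¹ := by rw [pow_succ']; group
        _ = u * (c ^ k * v) * u⁻¹ * v⁻¹ := by rw [ih']
        _ = (u * c ^ k) * (v * u⁻¹ * v⁻¹) := by group
        _ = (c ^ k * u) * (v * u⁻¹ * v⁻¹) := by rw [← hcomm]
        _ = c ^ k * c := by rw [hc]; group
        _ = c ^ (k + 1) := by rw [pow_succ]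
  have key2 : ∀ k : ℕ, u * v ^ k * u⁻¹ * (v ^ k)⁻¹ = c ^ k := by
    intro k
    induction k with
    | zero => simp
    | succ k ih =>
      have ih' : u * v ^ k * u⁻¹ = c ^ k * v ^ k := by
        rw [← ih]; group
      calc u * v ^ (k + 1) * u⁻¹ * (v ^ (k + 1))⁻¹
          = (u * v ^ k * u⁻¹) * (u * v * u⁻¹ * v⁻¹) * v⁻¹ * (v ^ k)⁻¹ * v := by
            rw [pow_succ]; group
        _ = (c ^ k * v ^ k) * c * v⁻¹ * (v ^ k)⁻¹ * v := by rw [ih', hc]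
        _ = c ^ k * (v ^ k * (c * v⁻¹ * (v ^ k)⁻¹ * v)) := by group
        _ = c ^ (k + 1) := by
            have h3 : v ^ k * c = c * v ^ k := ((hcv.pow_right k).eq).symm
            rw [show v ^ k * (c * v⁻¹ * (v ^ k)⁻¹ * v) = (v ^ k * c) * (v⁻¹ * (v ^ k)⁻¹ * v)
              by group, h3, pow_succ]
            group
  have e1 : c ^ (orderOf u) = 1 := by
    rw [← key1, pow_orderOf_eq_one]; group
  have e2 : c ^ (orderOf v) = 1 := by
    rw [← key2, pow_orderOf_eq_one]; group
  have hdvd : orderOf c ∣ Nat.gcd (orderOf u) (orderOf v) :=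
    Nat.dvd_gcd (orderOf_dvd_of_pow_eq_one e1) (orderOf_dvd_of_pow_eq_one e2)
  rw [Nat.Coprime] at hco
  rw [hco, Nat.dvd_one] at hdvd
  have hc1 : c = 1 := orderOf_eq_one_iff.mp hdvd
  rw [hc, mul_inv_eq_one, mul_inv_eq_iff_eq_mul] at hc1
  exact hc1

/-- Decomposition of a torsion element. -/
private lemma decomp {G : Type*} [Group G] {m n : ℕ} (hmn : Nat.Coprime m n)
    (x : G) (hx : IsOfFinOrder x) :
    ∃ y z : G, x = y * z ∧
      (∃ a, a ^ n = y) ∧ (∃ b, b ^ m = z) ∧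
      orderOf y ∣ m ^ (orderOf x) ∧ Nat.Coprime (orderOf z) m := by
  set k := orderOf x with hk
  have hk0 : k ≠ 0 := (hx.orderOf_pos).ne'
  set d := Nat.gcd k (m ^ k) with hd
  set e := k / d with he
  have hdk : d ∣ k := Nat.gcd_dvd_left _ _
  have hde : d * e = k := Nat.mul_div_cancel' hdk
  have hem : Nat.Coprime e m := by
    by_contra h
    obtain ⟨p, hp, hpe, hpm⟩ := Nat.Prime.not_coprime_iff_dvd.mp h
    exact core_arith hk0 hp hpm hpe
  have hdec : Nat.Coprime d e := by
    by_contra h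
    obtain ⟨p, hp, hpd, hpe⟩ := Nat.Prime.not_coprime_iff_dvd.mp h
    have hpm : p ∣ m := hp.dvd_of_dvd_pow (hpd.trans (Nat.gcd_dvd_right _ _))
    exact core_arith hk0 hp hpm hpe
  have hic : IsCoprime (d : ℤ) (e : ℤ) := by
    rw [Int.isCoprime_iff_gcd_eq_one, Int.gcd_natCast_natCast]; exact hdec
  obtain ⟨s, t, hst⟩ := hic
  have hxk : x ^ (k : ℤ) = 1 := by rw [zpow_natCast, hk, pow_orderOf_eq_one]
  have hyd : (x ^ (t * (e : ℤ))) ^ d = 1 := by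
    rw [← zpow_natCast, ← zpow_mul,
      show t * (e : ℤ) * (d : ℤ) = (k : ℤ) * t by push_cast [← hde]; ring,
      zpow_mul, hxk, one_zpow]
  have hze : (x ^ (s * (d : ℤ))) ^ e = 1 := by
    rw [← zpow_natCast, ← zpow_mul,
      show s * (d : ℤ) * (e : ℤ) = (k : ℤ) * s by push_cast [← hde]; ring,
      zpow_mul, hxk, one_zpow]
  refine ⟨x ^ (t * (e : ℤ)), x ^ (s * (d : ℤ)), ?_, ?_, ?_, ?_, ?_⟩
  · rw [← zpow_add, show t * (e : ℤ) + s * (d : ℤ) = 1 by linarith [hst], zpow_one]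
  · have hnd : Nat.Coprime n d :=
      (hmn.symm.pow_right k).coprime_dvd_right (Nat.gcd_dvd_right _ _)
    exact exists_pow_eq _ hyd hnd
  · exact exists_pow_eq _ hze hem.symm
  · exact (orderOf_dvd_of_pow_eq_one hyd).trans (Nat.gcd_dvd_right _ _)
  · exact hem.coprime_dvd_left (orderOf_dvd_of_pow_eq_one hze)

theorem torsion_is_normal_abelian_subgroup (G : Type*) [Group G]
    (m n : ℕ) (hmn : Nat.Coprime m n)
    (hm : ∀ a b : G, a ^ m * b ^ m = b ^ m * a ^ m)
    (hn : ∀ a b : G, a ^ n * b ^ n = b ^ n * a ^ n) :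
    ∃ T : Subgroup G, (∀ x : G, x ∈ T ↔ IsOfFinOrder x) ∧ T.Normal ∧
      ∀ x y : G, x ∈ T → y ∈ T → x * y = y * x := by
  -- All torsion elements commute
  have key : ∀ x y : G, IsOfFinOrder x → IsOfFinOrder y → Commute x y := by
    intro x x' hx hx'
    obtain ⟨y1, z1, hxe, hy1n, hz1m, hy1d, hz1c⟩ := decomp hmn x hx
    obtain ⟨y2, z2, hxe', hy2n, hz2m, hy2d, hz2c⟩ := decomp hmn x' hx'
    rw [hxe, hxe']
    have cyy : Commute y1 y2 := by
      obtain ⟨a1, ha1⟩ := hy1n; obtain ⟨a2, ha2⟩ := hy2n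
      rw [← ha1, ← ha2]; exact hn _ _
    have czz : Commute z1 z2 := by
      obtain ⟨b1, hb1⟩ := hz1m; obtain ⟨b2, hb2⟩ := hz2m
      rw [← hb1, ← hb2]; exact hm _ _
    have cyz : Commute y1 z2 := by
      apply cross hm hn hy1n hz2m
      exact ((hz2c.pow_right (orderOf x)).coprime_dvd_right hy1d).symm
    have czy : Commute z1 y2 := by
      apply (cross hm hn hy2n hz1m _).symm
      exact ((hz1c.pow_right (orderOf x')).coprime_dvd_right hy2d).symm
    exact (cyy.mul_right cyz).mul_left (czy.mul_right czz)
  refine ⟨{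
    carrier := {x : G | IsOfFinOrder x}
    one_mem' := IsOfFinOrder.one
    mul_mem' := fun {a b} ha hb => (key a b ha hb).isOfFinOrder_mul ha hb
    inv_mem' := fun {a} ha => ha.inv }, fun x => Iff.rfl, ?_, fun x y hx hy => key x y hx hy⟩
  constructor
  intro x hx g
  have : IsOfFinOrder ((MulAut.conj g) x) := MonoidHom.isOfFinOrder (MulAut.conj g).toMonoidHom hx
  simpa [MulAut.conj_apply] using this
end

section
/- Let m, n be coprime natural numbers. Every residually finite group G satisfying aᵐbᵐ = bᵐaᵐ and aⁿbⁿ = bⁿaⁿ for all a, b ∈ G is abelian. -/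
section Aux

variable {G : Type*} [Group G]

/-- If k-th powers pairwise commute, the subgroup they generate is commutative. -/
private lemma aux_closure_comm (k : ℕ) (h : ∀ a b : G, a ^ k * b ^ k = b ^ k * a ^ k) :
    ∀ x ∈ Subgroup.closure (Set.range (· ^ k : G → G)),
      ∀ y ∈ Subgroup.closure (Set.range (· ^ k : G → G)), Commute x y := by
  set S : Set G := Set.range (· ^ k : G → G) with hS
  have key : Subgroup.closure S ≤ Subgroup.centralizer (Subgroup.closure S : Set G) := by
    rw [Subgroup.closure_le]
    intro s hs
    rw [SetLike.mem_coe, Subgroup.mem_centralizer_iff]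
    intro g hg
    rw [SetLike.mem_coe] at hg
    induction hg using Subgroup.closure_induction with
    | mem x hx =>
        obtain ⟨a, rfl⟩ := hx
        obtain ⟨b, rfl⟩ := hs
        exact h a b
    | one => simp
    | mul x y _ _ hx hy => rw [mul_assoc, hy, ← mul_assoc, hx, mul_assoc]
    | inv x _ hx =>
        have hcom : Commute x s := hx
        exact hcom.inv_left.eq
  intro x hx y hy
  exact (Subgroup.mem_centralizer_iff.mp (key hx) y hy).symm

private lemma aux_closure_normal (k : ℕ) :
    (Subgroup.closure (Set.range (· ^ k : G → G))).Normal := by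
  constructor
  intro x hx g
  induction hx using Subgroup.closure_induction with
  | mem y hy =>
      obtain ⟨a, rfl⟩ := hy
      refine Subgroup.subset_closure ⟨g * a * g⁻¹, ?_⟩
      show (g * a * g⁻¹) ^ k = g * a ^ k * g⁻¹
      exact conj_pow ..
  | one => simpa using Subgroup.one_mem _
  | mul y z _ _ hy hz =>
      have e : g * (y * z) * g⁻¹ = (g * y * g⁻¹) * (g * z * g⁻¹) := by group
      rw [e]; exact Subgroup.mul_mem _ hy hz
  | inv y _ hy =>
      have e : g * y⁻¹ * g⁻¹ = (g * y * g⁻¹)⁻¹ := by group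
      rw [e]; exact Subgroup.inv_mem _ hy

private lemma aux_pow_left (x y c : G) (hc : ∀ g : G, Commute c g)
    (h : x * y = c * y * x) : ∀ k : ℕ, x ^ k * y = c ^ k * y * x ^ k := by
  intro k
  induction k with
  | zero => simp
  | succ k ih =>
      calc x ^ (k + 1) * y = x ^ k * (x * y) := by rw [pow_succ]; group
        _ = x ^ k * (c * y * x) := by rw [h]
        _ = c * (x ^ k * y) * x := by
            rw [show x ^ k * (c * y * x) = (x ^ k * c) * y * x by group,
              show x ^ k * c = c * x ^ k from ((hc (x ^ k)).eq).symm]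
            group
        _ = c * (c ^ k * y * x ^ k) * x := by rw [ih]
        _ = c ^ (k + 1) * y * x ^ (k + 1) := by
            rw [pow_succ x, show c * (c ^ k * y * x ^ k) * x = (c * c ^ k) * y * (x ^ k * x) by group,
              show c * c ^ k = c ^ (k + 1) by rw [pow_succ, (hc (c ^ k)).eq]]

private lemma aux_pow_right (x y c : G) (hc : ∀ g : G, Commute c g)
    (h : x * y = c * y * x) : ∀ k : ℕ, x * y ^ k = c ^ k * y ^ k * x := by
  intro k
  induction k with
  | zero => simp
  | succ k ih =>
      calc x * y ^ (k + 1) = (x * y) * y ^ k := by rw [pow_succ']; group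
        _ = c * y * (x * y ^ k) := by rw [h]; group
        _ = c * y * (c ^ k * y ^ k * x) := by rw [ih]
        _ = c ^ (k + 1) * y ^ (k + 1) * x := by
            rw [show c * y * (c ^ k * y ^ k * x) = c * (y * c ^ k) * y ^ k * x by group,
              show y * c ^ k = c ^ k * y from (((hc y).pow_left k).eq).symm,
              show c * (c ^ k * y) * y ^ k * x = (c * c ^ k) * (y * y ^ k) * x by group,
              show c * c ^ k = c ^ (k + 1) by rw [pow_succ, (hc (c ^ k)).eq],
              ← pow_succ' y]

end Aux

theorem residually_finite_abelian_of_coprime_powers_commute (G : Type*) [Group G]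
    (m n : ℕ) (hmn : Nat.Coprime m n)
    (hres : ∀ g : G, g ≠ 1 → ∃ N : Subgroup G, N.Normal ∧ g ∉ N ∧ Finite (G ⧸ N))
    (hm : ∀ a b : G, a ^ m * b ^ m = b ^ m * a ^ m)
    (hn : ∀ a b : G, a ^ n * b ^ n = b ^ n * a ^ n) :
    ∀ a b : G, a * b = b * a := by
  classical
  set A : Subgroup G := Subgroup.closure (Set.range (· ^ m : G → G)) with hA
  set B : Subgroup G := Subgroup.closure (Set.range (· ^ n : G → G)) with hB
  have hAcomm := aux_closure_comm m hm
  have hBcomm := aux_closure_comm n hn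
  have hAnorm : A.Normal := aux_closure_normal m
  have hBnorm : B.Normal := aux_closure_normal n
  -- Bézout
  obtain ⟨u, v, huv⟩ : ∃ u v : ℤ, u * m + v * n = 1 := by
    have hcop : IsCoprime (m : ℤ) (n : ℤ) := by
      rw [Int.isCoprime_iff_gcd_eq_one]; simpa using hmn
    obtain ⟨u, v, h⟩ := hcop
    exact ⟨u, v, h⟩
  have hdecomp : ∀ g : G, ∃ a ∈ A, ∃ b ∈ B, g = a * b := by
    intro g
    refine ⟨(g ^ m) ^ u, A.zpow_mem (Subgroup.subset_closure ⟨g, rfl⟩) u,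
      (g ^ n) ^ v, B.zpow_mem (Subgroup.subset_closure ⟨g, rfl⟩) v, ?_⟩
    conv_lhs => rw [show g = g ^ (u * m + v * n) by rw [huv, zpow_one],
      zpow_add, mul_comm u (m : ℤ), mul_comm v (n : ℤ), zpow_mul, zpow_mul,
      zpow_natCast, zpow_natCast]
  -- commutators of A with B lie in A ⊓ B
  have hK3 : ∀ a ∈ A, ∀ b ∈ B, a * b * a⁻¹ * b⁻¹ ∈ A ⊓ B := by
    intro a ha b hb
    constructor
    · have h1 : b * a⁻¹ * b⁻¹ ∈ A := hAnorm.conj_mem a⁻¹ (A.inv_mem ha) b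
      have e : a * b * a⁻¹ * b⁻¹ = a * (b * a⁻¹ * b⁻¹) := by group
      rw [e]; exact A.mul_mem ha h1
    · have h1 : a * b * a⁻¹ ∈ B := hBnorm.conj_mem b hb a
      exact B.mul_mem h1 (B.inv_mem hb)
  -- A ⊓ B is central
  have hK2 : A ⊓ B ≤ Subgroup.center G := by
    intro z hz
    rw [Subgroup.mem_center_iff]
    intro g
    obtain ⟨a, ha, b, hb, rfl⟩ := hdecomp g
    exact (((hAcomm z hz.1 a ha).mul_right (hBcomm z hz.2 b hb)).symm).eq
  haveI : (A ⊓ B).Normal := inferInstance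
  -- everything commutes modulo A ⊓ B
  have hq : ∀ x y : G, ((x * y : G) : G ⧸ (A ⊓ B)) = ((y * x : G) : G ⧸ (A ⊓ B)) := by
    have hABq : ∀ a ∈ A, ∀ b ∈ B,
        Commute ((a : G) : G ⧸ (A ⊓ B)) ((b : G) : G ⧸ (A ⊓ B)) := by
      intro a ha b hb
      have e : ((a * b : G) : G ⧸ (A ⊓ B)) = ((b * a : G) : G ⧸ (A ⊓ B)) := by
        rw [QuotientGroup.eq]
        have e2 : (a * b)⁻¹ * (b * a) = (a⁻¹ * b⁻¹ * (a⁻¹)⁻¹ * (b⁻¹)⁻¹)⁻¹ := by group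
        rw [e2]
        exact (A ⊓ B).inv_mem (hK3 a⁻¹ (A.inv_mem ha) b⁻¹ (B.inv_mem hb))
      simpa [commute_iff_eq] using e
    intro x y
    obtain ⟨a₁, ha₁, b₁, hb₁, rfl⟩ := hdecomp x
    obtain ⟨a₂, ha₂, b₂, hb₂, rfl⟩ := hdecomp y
    have caa : Commute ((a₁ : G) : G ⧸ (A ⊓ B)) ((a₂ : G) : G ⧸ (A ⊓ B)) := by
      have e : ((a₁ * a₂ : G) : G ⧸ (A ⊓ B)) = ((a₂ * a₁ : G) : G ⧸ (A ⊓ B)) := by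
        rw [hAcomm a₁ ha₁ a₂ ha₂]
      simpa [commute_iff_eq] using e
    have cbb : Commute ((b₁ : G) : G ⧸ (A ⊓ B)) ((b₂ : G) : G ⧸ (A ⊓ B)) := by
      have e : ((b₁ * b₂ : G) : G ⧸ (A ⊓ B)) = ((b₂ * b₁ : G) : G ⧸ (A ⊓ B)) := by
        rw [hBcomm b₁ hb₁ b₂ hb₂]
      simpa [commute_iff_eq] using e
    have h1 : Commute ((a₁ : G) : G ⧸ (A ⊓ B)) (((a₂ : G) : G ⧸ (A ⊓ B)) * ((b₂ : G) : G ⧸ (A ⊓ B))) :=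
      caa.mul_right (hABq a₁ ha₁ b₂ hb₂)
    have h2 : Commute ((b₁ : G) : G ⧸ (A ⊓ B)) (((a₂ : G) : G ⧸ (A ⊓ B)) * ((b₂ : G) : G ⧸ (A ⊓ B))) :=
      (hABq a₂ ha₂ b₁ hb₁).symm.mul_right cbb
    have key := (h1.mul_left h2).eq
    show ((a₁ * b₁ * (a₂ * b₂) : G) : G ⧸ (A ⊓ B)) = ((a₂ * b₂ * (a₁ * b₁) : G) : G ⧸ (A ⊓ B))
    simpa [mul_assoc] using key
  -- commutators are central
  have hcentral : ∀ x y : G, x * y * x⁻¹ * y⁻¹ ∈ Subgroup.center G := by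
    intro x y
    have h := hq y⁻¹ x⁻¹
    rw [QuotientGroup.eq] at h
    have e : (y⁻¹ * x⁻¹)⁻¹ * (x⁻¹ * y⁻¹) = x * y * x⁻¹ * y⁻¹ := by group
    rw [e] at h
    exact hK2 h
  -- conclude using class ≤ 2 and coprimality
  intro a b
  have hc : ∀ g : G, Commute (a * b * a⁻¹ * b⁻¹) g :=
    fun g => (Subgroup.mem_center_iff.mp (hcentral a b) g).symm
  have h1 : a * b = (a * b * a⁻¹ * b⁻¹) * b * a := by group
  have h2 := aux_pow_left a b _ hc h1 m
  have hcm : ∀ g : G, Commute ((a * b * a⁻¹ * b⁻¹) ^ m) g := fun g => (hc g).pow_left m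
  have h3 := aux_pow_right (a ^ m) b _ hcm h2 m
  have h4 : ((a * b * a⁻¹ * b⁻¹) ^ m) ^ m * (b ^ m * a ^ m) = 1 * (b ^ m * a ^ m) := by
    rw [one_mul, ← mul_assoc, ← h3, hm]
  have h5 : (a * b * a⁻¹ * b⁻¹) ^ (m * m) = 1 := by
    rw [pow_mul]; exact mul_right_cancel h4
  have h1n : a * b = (a * b * a⁻¹ * b⁻¹) * b * a := by group
  have h2n := aux_pow_left a b _ hc h1n n
  have hcn : ∀ g : G, Commute ((a * b * a⁻¹ * b⁻¹) ^ n) g := fun g => (hc g).pow_left n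
  have h3n := aux_pow_right (a ^ n) b _ hcn h2n n
  have h4n : ((a * b * a⁻¹ * b⁻¹) ^ n) ^ n * (b ^ n * a ^ n) = 1 * (b ^ n * a ^ n) := by
    rw [one_mul, ← mul_assoc, ← h3n, hn]
  have h5n : (a * b * a⁻¹ * b⁻¹) ^ (n * n) = 1 := by
    rw [pow_mul]; exact mul_right_cancel h4n
  have hdvd1 : orderOf (a * b * a⁻¹ * b⁻¹) ∣ m * m := orderOf_dvd_of_pow_eq_one h5
  have hdvd2 : orderOf (a * b * a⁻¹ * b⁻¹) ∣ n * n := orderOf_dvd_of_pow_eq_one h5n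
  have hco : Nat.Coprime (m * m) (n * n) :=
    Nat.Coprime.mul (hmn.mul_right hmn) (hmn.mul_right hmn)
  have hdvd : orderOf (a * b * a⁻¹ * b⁻¹) ∣ 1 := by
    have := Nat.dvd_gcd hdvd1 hdvd2
    rwa [hco.gcd_eq_one] at this
  have hc1 : a * b * a⁻¹ * b⁻¹ = 1 := orderOf_eq_one_iff.mp (Nat.dvd_one.mp hdvd)
  calc a * b = (a * b * a⁻¹ * b⁻¹) * (b * a) := by group
    _ = b * a := by rw [hc1, one_mul]
end

section
/- Let m, n be coprime natural numbers and G a polycyclic group satisfying aᵐbᵐ = bᵐaᵐ and aⁿbⁿ = bⁿaⁿ for all a, b ∈ G. Then G is abelian. -/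
/-- A group is polycyclic iff it is solvable and every subgroup is finitely
generated (a standard characterization of polycyclic groups). -/
def IsPolycyclic (G : Type*) [Group G] : Prop :=
  IsSolvable G ∧ ∀ H : Subgroup G, H.FG

open scoped commutatorElement

private lemma conj_pow_aux {G : Type*} [Group G] (g u : G) (k : ℕ) :
    (g * u * g⁻¹) ^ k = g * u ^ k * g⁻¹ := by
  induction k with
  | zero => group
  | succ k ih => rw [pow_succ, ih, pow_succ]; group

private lemma comm_mul_right_aux {G : Type*} [Group G] (p q r : G) :
    ⁅p, q * r⁆ = ⁅p, q⁆ * (q * ⁅p, r⁆ * q⁻¹) := by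
  simp only [commutatorElement_def]; group

private lemma comm_mul_left_aux {G : Type*} [Group G] (p q r : G) :
    ⁅p * q, r⁆ = (p * ⁅q, r⁆ * p⁻¹) * ⁅p, r⁆ := by
  simp only [commutatorElement_def]; group

theorem polycyclic_abelian_of_coprime_powers_commute (G : Type*) [Group G]
    (hpoly : IsPolycyclic G)
    (m n : ℕ) (hmn : Nat.Coprime m n)
    (hm : ∀ a b : G, a ^ m * b ^ m = b ^ m * a ^ m)
    (hn : ∀ a b : G, a ^ n * b ^ n = b ^ n * a ^ n) :
    ∀ a b : G, a * b = b * a := by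
  classical
  set A : Subgroup G := Subgroup.closure (Set.range fun x : G => x ^ m) with hA
  set B : Subgroup G := Subgroup.closure (Set.range fun x : G => x ^ n) with hB
  -- A is abelian (pairwise commuting)
  have habA : ∀ a ∈ A, ∀ b ∈ A, Commute a b := by
    intro a ha b hb
    refine Subgroup.closure_induction₂
      (fun x y hx hy => ?_) (fun x _ => Commute.one_left x) (fun x _ => Commute.one_right x)
      (fun x y z _ _ _ h1 h2 => h1.mul_left h2) (fun y z x _ _ _ h1 h2 => h1.mul_right h2)
      (fun x y _ _ h => h.inv_left) (fun x y _ _ h => h.inv_right) ha hb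
    obtain ⟨u, rfl⟩ := hx; obtain ⟨v, rfl⟩ := hy; exact hm u v
  have habB : ∀ a ∈ B, ∀ b ∈ B, Commute a b := by
    intro a ha b hb
    refine Subgroup.closure_induction₂
      (fun x y hx hy => ?_) (fun x _ => Commute.one_left x) (fun x _ => Commute.one_right x)
      (fun x y z _ _ _ h1 h2 => h1.mul_left h2) (fun y z x _ _ _ h1 h2 => h1.mul_right h2)
      (fun x y _ _ h => h.inv_left) (fun x y _ _ h => h.inv_right) ha hb
    obtain ⟨u, rfl⟩ := hx; obtain ⟨v, rfl⟩ := hy; exact hn u v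
  -- A and B are closed under conjugation
  have hconj : ∀ (k : ℕ) (g a : G),
      a ∈ Subgroup.closure (Set.range fun x : G => x ^ k) →
      g * a * g⁻¹ ∈ Subgroup.closure (Set.range fun x : G => x ^ k) := by
    intro k g a ha
    refine Subgroup.closure_induction (p := fun a _ =>
        g * a * g⁻¹ ∈ Subgroup.closure (Set.range fun x : G => x ^ k))
      (fun x hx => ?_) (by simpa using one_mem _)
      (fun x y _ _ h1 h2 => by
        show g * (x * y) * g⁻¹ ∈ _
        have : g * (x * y) * g⁻¹ = (g * x * g⁻¹) * (g * y * g⁻¹) := by group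
        rw [this]; exact mul_mem h1 h2)
      (fun x _ h => by
        show g * x⁻¹ * g⁻¹ ∈ _
        have : g * x⁻¹ * g⁻¹ = (g * x * g⁻¹)⁻¹ := by group
        rw [this]; exact inv_mem h) ha
    obtain ⟨u, rfl⟩ := hx
    show g * u ^ k * g⁻¹ ∈ _
    exact Subgroup.subset_closure ⟨g * u * g⁻¹, conj_pow_aux g u k⟩
  have hconjA : ∀ g a : G, a ∈ A → g * a * g⁻¹ ∈ A := fun g a ha => hconj m g a ha
  have hconjB : ∀ g a : G, a ∈ B → g * a * g⁻¹ ∈ B := fun g a ha => hconj n g a ha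
  -- every element decomposes as a product of an element of A and an element of B
  obtain ⟨s, t, hst⟩ : ∃ s t : ℤ, s * (m : ℤ) + t * (n : ℤ) = 1 := hmn.isCoprime
  have hdecomp : ∀ g : G, ∃ a ∈ A, ∃ b ∈ B, g = a * b := by
    intro g
    refine ⟨(g ^ s) ^ m, Subgroup.subset_closure ⟨g ^ s, rfl⟩,
      (g ^ t) ^ n, Subgroup.subset_closure ⟨g ^ t, rfl⟩, ?_⟩
    have : (g ^ s) ^ m * (g ^ t) ^ n = g ^ (s * (m : ℤ) + t * (n : ℤ)) := by
      rw [zpow_add, zpow_mul, zpow_mul, zpow_natCast, zpow_natCast]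
    rw [this, hst, zpow_one]
  -- A ∩ B is central
  have hcapZ : ∀ z : G, z ∈ A → z ∈ B → z ∈ Subgroup.center G := by
    intro z hzA hzB
    rw [Subgroup.mem_center_iff]
    intro g
    obtain ⟨a, ha, b, hb, rfl⟩ := hdecomp g
    exact (((habA z hzA a ha).symm.mul_left ((habB z hzB b hb).symm)).symm : Commute z (a*b)).symm
  -- commutators of A-elements with B-elements are central
  have hABZ : ∀ a ∈ A, ∀ b ∈ B, ⁅a, b⁆ ∈ Subgroup.center G := by
    intro a ha b hb
    apply hcapZ
    · have : ⁅a, b⁆ = a * (b * a⁻¹ * b⁻¹) := by group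
      rw [this]; exact mul_mem ha (hconjA b a⁻¹ (inv_mem ha))
    · have : ⁅a, b⁆ = (a * b * a⁻¹) * b⁻¹ := by group
      rw [this]; exact mul_mem (hconjB a b hb) (inv_mem hb)
  -- hence ALL commutators are central (class ≤ 2)
  have hZn : (Subgroup.center G).Normal := inferInstance
  have hmulR : ∀ p q r : G, ⁅p, q⁆ ∈ Subgroup.center G → ⁅p, r⁆ ∈ Subgroup.center G →
      ⁅p, q * r⁆ ∈ Subgroup.center G := by
    intro p q r h1 h2
    rw [comm_mul_right_aux]
    exact mul_mem h1 (hZn.conj_mem _ h2 q)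
  have hmulL : ∀ p q r : G, ⁅p, r⁆ ∈ Subgroup.center G → ⁅q, r⁆ ∈ Subgroup.center G →
      ⁅p * q, r⁆ ∈ Subgroup.center G := by
    intro p q r h1 h2
    rw [comm_mul_left_aux]
    exact mul_mem (hZn.conj_mem _ h2 p) h1
  have hcent : ∀ x y : G, ⁅x, y⁆ ∈ Subgroup.center G := by
    intro x y
    obtain ⟨a1, ha1, b1, hb1, rfl⟩ := hdecomp x
    obtain ⟨a2, ha2, b2, hb2, rfl⟩ := hdecomp y
    have hAA : ⁅a1, a2⁆ ∈ Subgroup.center G := by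
      rw [(habA a1 ha1 a2 ha2).commutator_eq]; exact one_mem _
    have hBB : ⁅b1, b2⁆ ∈ Subgroup.center G := by
      rw [(habB b1 hb1 b2 hb2).commutator_eq]; exact one_mem _
    have hBA : ⁅b1, a2⁆ ∈ Subgroup.center G := by
      rw [← commutatorElement_inv]; exact inv_mem (hABZ a2 ha2 b1 hb1)
    exact hmulL a1 b1 (a2 * b2) (hmulR a1 a2 b2 hAA (hABZ a1 ha1 b2 hb2))
      (hmulR b1 a2 b2 hBA hBB)
  -- commutator power identities in a class-2 group
  have hconj_cent : ∀ x y g : G, g * ⁅x, y⁆ * g⁻¹ = ⁅x, y⁆ := by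
    intro x y g
    have := (Subgroup.mem_center_iff.mp (hcent x y)) g
    rw [this, mul_assoc, mul_inv_cancel, mul_one]
  have hpowR : ∀ (x y : G) (k : ℕ), ⁅x, y ^ k⁆ = ⁅x, y⁆ ^ k := by
    intro x y k
    induction k with
    | zero => simp
    | succ k ih =>
      rw [pow_succ' y k, comm_mul_right_aux, hconj_cent, ih, pow_succ']
  have hpowL : ∀ (x y : G) (k : ℕ), ⁅x ^ k, y⁆ = ⁅x, y⁆ ^ k := by
    intro x y k
    induction k with
    | zero => simp
    | succ k ih =>
      rw [pow_succ' x k, comm_mul_left_aux, hconj_cent, ih, pow_succ]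
  -- finish
  intro a b
  rw [← commutatorElement_eq_one_iff_mul_comm]
  have h1 : ⁅a, b⁆ ^ (m * m) = 1 := by
    rw [pow_mul, ← hpowR, ← hpowL, commutatorElement_eq_one_iff_mul_comm]
    exact hm a b
  have h2 : ⁅a, b⁆ ^ (n * n) = 1 := by
    rw [pow_mul, ← hpowR, ← hpowL, commutatorElement_eq_one_iff_mul_comm]
    exact hn a b
  have hd1 := orderOf_dvd_of_pow_eq_one h1
  have hd2 := orderOf_dvd_of_pow_eq_one h2
  have hcop : Nat.Coprime (m * m) (n * n) := (hmn.mul_right hmn).mul (hmn.mul_right hmn)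
  have : orderOf ⁅a, b⁆ ∣ 1 := hcop ▸ Nat.dvd_gcd hd1 hd2
  rw [← orderOf_eq_one_iff]
  exact Nat.dvd_one.mp this
end
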